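/- The numbers u_{n,k} defined by u_{n,k} = (2k-1)·u_{n-1,k} + 2(n-2)·u_{n-2,k-1} for n ≥ 2 (with u_{0,0}=1, u_{1,1}=1, and u_{n,k}=0 otherwise for small n) give generating polynomials P_n(t) = ∑_k u_{n,k} t^k satisfying P_n(t) = 2t·P'_{n-1}(t) − P_{n-1}(t) + 2t(n-2)·P_{n-2}(t), and every P_n(t) is real-rooted. -/

import Mathlib

open Polynomial Finset

/-- `u n k`: number of type B merging-free separated set partitions of ⟨n⟩ with k blocks,
satisfying `u_{n,k} = (2k-1) u_{n-1,k} + 2(n-2) u_{n-2,k-1}` for n ≥ 2, with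
`u_{0,0} = 1`, `u_{1,1} = 1`, and `u_{n,k} = 0` otherwise for small n. -/
def u : ℕ → ℕ → ℕ
  | 0, 0 => 1
  | 0, _ + 1 => 0
  | 1, 1 => 1
  | 1, _ => 0
  | _ + 2, 0 => 0
  | n + 2, k + 1 => (2 * (k + 1) - 1) * u (n + 1) (k + 1) + 2 * n * u n k

/-- The generating polynomials `P_n(t) = ∑_k u_{n,k} t^k`. -/
noncomputable def Pu (n : ℕ) : Polynomial ℝ :=
  ∑ k ∈ Finset.range (n + 1), C (u n k : ℝ) * X ^ k

noncomputable def Qu (n : ℕ) : Polynomial ℝ :=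
  ∑ k ∈ Finset.range n, C (u n (k+1) : ℝ) * X ^ k

lemma u_gt : ∀ n k, n < k → u n k = 0 := by
  intro n
  induction n using Nat.strong_induction_on with
  | _ n ih =>
    match n with
    | 0 => rintro (_|k) h
           · omega
           · rfl
    | 1 => rintro (_|_|k) h <;> first | omega | rfl
    | (m+2) =>
      rintro (_|k) h
      · omega
      show (2 * (k + 1) - 1) * u (m + 1) (k + 1) + 2 * m * u m k = 0
      rw [ih (m+1) (by omega) (k+1) (by omega), ih m (by omega) k (by omega)]
      ring

lemma u_zero : ∀ n, 1 ≤ n → u n 0 = 0 := by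
  rintro (_|_|n) h
  · omega
  · rfl
  · rfl

lemma Pu_coeff (n k : ℕ) : (Pu n).coeff k = (u n k : ℝ) := by
  rw [Pu, finset_sum_coeff]
  simp only [coeff_C_mul, coeff_X_pow]
  rw [Finset.sum_eq_single k]
  · simp
  · intro b _ hb; simp [Ne.symm hb]
  · intro h
    simp only [Finset.mem_range, not_lt] at h
    simp [u_gt n k (by omega)]

lemma Qu_coeff (n k : ℕ) : (Qu n).coeff k = (u n (k+1) : ℝ) := by
  rw [Qu, finset_sum_coeff]
  simp only [coeff_C_mul, coeff_X_pow]
  rw [Finset.sum_eq_single k]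
  · simp
  · intro b _ hb; simp [Ne.symm hb]
  · intro h
    simp only [Finset.mem_range, not_lt] at h
    simp [u_gt n (k+1) (by omega)]

lemma Pu_eq (n : ℕ) (hn : 1 ≤ n) : Pu n = X * Qu n := by
  ext k
  cases k with
  | zero => simp [Pu_coeff, u_zero n hn]
  | succ k => rw [coeff_X_mul, Pu_coeff, Qu_coeff]

lemma Pu_rec (m : ℕ) :
    Pu (m+2) = 2 * X * derivative (Pu (m+1)) - Pu (m+1) + C (2 * (m:ℝ)) * X * Pu m := by
  ext k
  rw [coeff_add, coeff_sub, mul_assoc, mul_assoc, coeff_ofNat_mul, coeff_C_mul]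
  cases k with
  | zero =>
    simp only [mul_coeff_zero, coeff_X_zero, zero_mul, mul_zero, add_zero]
    rw [Pu_coeff, Pu_coeff]
    rw [show u (m+2) 0 = 0 from rfl, u_zero (m+1) (by omega)]
    push_cast; ring
  | succ k =>
    rw [coeff_X_mul, coeff_X_mul, coeff_derivative]
    simp only [Pu_coeff]
    have hu : u (m+2) (k+1) = (2 * (k + 1) - 1) * u (m + 1) (k + 1) + 2 * m * u m k := rfl
    have h1 : (2 * (k+1) - 1 : ℕ) = 2*k+1 := by omega
    rw [hu, h1]
    push_cast
    ring

lemma Qu_rec (n : ℕ) (hn : 1 ≤ n) :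
    Qu (n+2) = Qu (n+1) + 2*X*derivative (Qu (n+1)) + C (2*(n:ℝ)) * X * Qu n := by
  ext k
  rw [coeff_add, coeff_add, mul_assoc, mul_assoc, coeff_ofNat_mul, coeff_C_mul]
  cases k with
  | zero =>
    simp only [mul_coeff_zero, coeff_X_zero, zero_mul, mul_zero, add_zero]
    rw [Qu_coeff, Qu_coeff]
    have : u (n+2) 1 = (2 * 1 - 1) * u (n + 1) 1 + 2 * n * u n 0 := rfl
    rw [this, u_zero n hn]
    push_cast; ring
  | succ k =>
    rw [coeff_X_mul, coeff_X_mul, coeff_derivative]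
    simp only [Qu_coeff]
    have hu : u (n+2) (k+2) = (2 * (k + 2) - 1) * u (n + 1) (k + 2) + 2 * n * u n (k+1) := rfl
    have h1 : (2 * (k+2) - 1 : ℕ) = 2*k+3 := by omega
    rw [hu, h1]
    push_cast
    ring

lemma sign_prod {ι : Type*} [DecidableEq ι] (s : Finset ι) (v : ι → ℝ) (h : ∀ j ∈ s, v j ≠ 0) :
    0 < (-1:ℝ)^((s.filter (fun j => v j < 0)).card) * ∏ j ∈ s, v j := by
  induction s using Finset.induction_on with
  | empty => simp
  | @insert a s ha ih =>
    have hih := ih (fun j hj => h j (Finset.mem_insert_of_mem hj))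
    rw [Finset.filter_insert, Finset.prod_insert ha]
    by_cases hv : v a < 0
    · rw [if_pos hv, Finset.card_insert_of_notMem (by simp [ha])]
      have e : (-1:ℝ)^((s.filter (fun j => v j < 0)).card + 1) *
          (v a * ∏ j ∈ s, v j) =
          (-v a) * ((-1:ℝ)^((s.filter (fun j => v j < 0)).card) * ∏ j ∈ s, v j) := by
        rw [pow_succ]; ring
      rw [e]
      exact mul_pos (by linarith) hih
    · have hv' : 0 < v a := (h a (Finset.mem_insert_self a s)).lt_or_gt.resolve_left hv
      rw [if_neg hv]
      have e : (-1:ℝ)^((s.filter (fun j => v j < 0)).card) *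
          (v a * ∏ j ∈ s, v j) =
          v a * ((-1:ℝ)^((s.filter (fun j => v j < 0)).card) * ∏ j ∈ s, v j) := by ring
      rw [e]
      exact mul_pos hv' hih

lemma card_filter_le' (d m : ℕ) :
    ((Finset.univ : Finset (Fin d)).filter (fun j : Fin d => m ≤ (j:ℕ))).card = d - m := by
  by_cases hm : m < d
  · have : (Finset.univ : Finset (Fin d)).filter (fun j : Fin d => m ≤ (j:ℕ)) = Finset.Ici ⟨m, hm⟩ := by
      ext j
      simp [Finset.mem_Ici, Fin.le_def]
    rw [this, Fin.card_Ici]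
  · rw [Finset.filter_false_of_mem, Finset.card_empty]
    · omega
    · intro j _
      have := j.isLt
      omega

lemma exists_roots_of_alternating (h : ℝ[X]) (D : ℕ) (hdeg : h.natDegree = D)
    (p : Fin (D+1) → ℝ) (hp : StrictMono p)
    (hs : ∀ i : Fin (D+1), 0 < (-1:ℝ)^(D - (i:ℕ)) * h.eval (p i)) :
    ∃ ρ : Fin D → ℝ, StrictMono ρ ∧ (∀ i : Fin D, p i.castSucc < ρ i ∧ ρ i < p i.succ) ∧
      h = C h.leadingCoeff * ∏ i, (X - C (ρ i)) := by
  classical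
  have hroot : ∀ i : Fin D, ∃ x, x ∈ Set.Ioo (p i.castSucc) (p i.succ) ∧ h.eval x = 0 := by
    intro i
    have hlt : p i.castSucc < p i.succ := hp Fin.castSucc_lt_succ
    have h1 := hs i.castSucc
    have h2 := hs i.succ
    rw [Fin.coe_castSucc] at h1
    rw [Fin.val_succ] at h2
    have hree : D - (i:ℕ) = (D - ((i:ℕ)+1)) + 1 := by have := i.isLt; omega
    rw [hree, pow_succ] at h1
    rcases Nat.even_or_odd (D - ((i:ℕ)+1)) with he | ho
    · rw [he.neg_one_pow] at h1 h2
      have hA : h.eval (p i.castSucc) < 0 := by nlinarith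
      have hB : 0 < h.eval (p i.succ) := by linarith
      have := intermediate_value_Ioo hlt.le ((Polynomial.continuous h).continuousOn)
        (Set.mem_Ioo.2 ⟨hA, hB⟩)
      obtain ⟨x, hx, hx0⟩ := this
      exact ⟨x, hx, hx0⟩
    · rw [ho.neg_one_pow] at h1 h2
      have hA : 0 < h.eval (p i.castSucc) := by nlinarith
      have hB : h.eval (p i.succ) < 0 := by linarith
      have := intermediate_value_Ioo' hlt.le ((Polynomial.continuous h).continuousOn)
        (Set.mem_Ioo.2 ⟨hB, hA⟩)
      obtain ⟨x, hx, hx0⟩ := this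
      exact ⟨x, hx, hx0⟩
  choose ρ hmem hval using hroot
  have hmono : StrictMono ρ := by
    intro i j hij
    calc ρ i < p i.succ := (hmem i).2
      _ ≤ p j.castSucc := hp.monotone (by
        rw [Fin.le_def, Fin.val_succ, Fin.coe_castSucc]
        exact hij)
      _ < ρ j := (hmem j).1
  have hne : h ≠ 0 := by
    intro h0
    have := hs 0
    rw [h0] at this
    simp at this
  have hinj : Function.Injective ρ := hmono.injective
  have hmemroots : ∀ i, ρ i ∈ h.roots := fun i => mem_roots'.2 ⟨hne, hval i⟩
  have himg : (Finset.univ.image ρ).val ≤ h.roots := by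
    refine Multiset.le_iff_count.2 (fun x => ?_)
    by_cases hx : x ∈ Finset.univ.image ρ
    · rw [Multiset.count_eq_one_of_mem (Finset.univ.image ρ).nodup hx]
      obtain ⟨i, _, rfl⟩ := Finset.mem_image.1 hx
      exact Multiset.one_le_count_iff_mem.2 (hmemroots i)
    · rw [Multiset.count_eq_zero.2 (fun hc => hx (by simpa using hc))]
      exact Nat.zero_le _
  have hDcard : (Finset.univ.image ρ).card = D := by
    rw [Finset.card_image_of_injective _ hinj, Finset.card_univ, Fintype.card_fin]
  have hcard : Multiset.card h.roots = D := by
    refine le_antisymm (hdeg ▸ h.card_roots') ?_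
    calc D = (Finset.univ.image ρ).card := hDcard.symm
      _ ≤ _ := Multiset.card_le_card himg
  have hroots_eq : h.roots = (Finset.univ.image ρ).val := by
    refine (Multiset.eq_of_le_of_card_le himg ?_).symm
    rw [hcard]
    exact le_of_eq hDcard.symm
  have hsplits : h.Splits := splits_iff_card_roots.2 (by rw [hcard, hdeg])
  have heq := hsplits.eq_prod_roots
  rw [hroots_eq] at heq
  refine ⟨ρ, hmono, fun i => ⟨(hmem i).1, (hmem i).2⟩, ?_⟩
  have hprod : (Multiset.map (fun a => X - C a) (Finset.univ.image ρ).val).prod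
      = ∏ i, (X - C (ρ i)) := by
    rw [Finset.image_val, Multiset.dedup_eq_self.2 (Multiset.Nodup.map hinj Finset.univ.nodup),
      Multiset.map_map, Finset.prod_eq_multiset_prod]
    rfl
  rw [hprod] at heq
  exact heq

def RR (g f : ℝ[X]) : Prop :=
  ∃ (d e : ℕ) (a b : ℝ) (r : Fin d → ℝ) (s : Fin e → ℝ),
    0 < a ∧ 0 < b ∧ StrictMono r ∧
    f = C a * ∏ i, (X - C (r i)) ∧ g = C b * ∏ j, (X - C (s j)) ∧
    (∀ i, r i < 0) ∧ (∀ j, s j < 0) ∧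
    (e = d ∨ e + 1 = d) ∧
    (∀ i : Fin d, ((Finset.univ.filter (fun j : Fin e => r i < s j)).card = d - 1 - (i:ℕ))) ∧
    (∀ (i : Fin d) (j : Fin e), s j ≠ r i)

lemma step {f g h : ℝ[X]} {c : ℝ} (hc : 0 < c)
    (hrec : h = f + 2*X*derivative f + C c * X * g) (H : RR g f) : RR f h := by
  classical
  obtain ⟨d, e, a, b, r, s, ha, hb, hr, hf, hg, hrneg, hsneg, hde, hcount, hdist⟩ := H
  -- eval formulas
  have hfeval : ∀ x, f.eval x = a * ∏ i, (x - r i) := by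
    intro x; rw [hf]; simp [eval_prod]
  have hgeval : ∀ x, g.eval x = b * ∏ j, (x - s j) := by
    intro x; rw [hg]; simp [eval_prod]
  -- degrees
  have hfdeg : f.natDegree = d := by
    rw [hf, natDegree_C_mul (ne_of_gt ha),
      natDegree_prod _ _ (fun i _ => X_sub_C_ne_zero (r i))]
    simp [natDegree_X_sub_C]
  have hgdeg : g.natDegree = e := by
    rw [hg, natDegree_C_mul (ne_of_gt hb),
      natDegree_prod _ _ (fun i _ => X_sub_C_ne_zero (s i))]
    simp [natDegree_X_sub_C]
  -- top coefficients
  have hmonf : (∏ i, (X - C (r i)) : ℝ[X]).Monic :=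
    monic_prod_of_monic _ _ (fun i _ => monic_X_sub_C (r i))
  have hmong : (∏ j, (X - C (s j)) : ℝ[X]).Monic :=
    monic_prod_of_monic _ _ (fun i _ => monic_X_sub_C (s i))
  have hprdeg : (∏ i, (X - C (r i)) : ℝ[X]).natDegree = d := by
    rw [natDegree_prod _ _ (fun i _ => X_sub_C_ne_zero (r i))]
    simp [natDegree_X_sub_C]
  have hpsdeg : (∏ j, (X - C (s j)) : ℝ[X]).natDegree = e := by
    rw [natDegree_prod _ _ (fun i _ => X_sub_C_ne_zero (s i))]
    simp [natDegree_X_sub_C]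
  have hflead : f.coeff d = a := by
    have h1 := hmonf.coeff_natDegree
    rw [hprdeg] at h1
    rw [hf, coeff_C_mul, h1, mul_one]
  have hglead : g.coeff e = b := by
    have h1 := hmong.coeff_natDegree
    rw [hpsdeg] at h1
    rw [hg, coeff_C_mul, h1, mul_one]
  -- derivative eval
  have hderiv : ∀ i : Fin d, (derivative f).eval (r i)
      = a * ∏ j ∈ Finset.univ.erase i, (r i - r j) := by
    intro i
    have hfsplit : f = C a * ((X - C (r i)) * ∏ j ∈ Finset.univ.erase i, (X - C (r j))) := by
      rw [hf, ← Finset.mul_prod_erase _ _ (Finset.mem_univ i)]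
    rw [hfsplit, derivative_C_mul, derivative_mul, derivative_sub, derivative_X, derivative_C,
      sub_zero, one_mul, eval_mul, eval_C, eval_add, eval_mul, eval_sub, eval_X, eval_C,
      sub_self, zero_mul, add_zero, eval_prod]
    simp [eval_sub, eval_X, eval_C]
  -- sign facts
  have hprod_r : ∀ i : Fin d,
      0 < (-1:ℝ)^(d - 1 - (i:ℕ)) * ∏ j ∈ Finset.univ.erase i, (r i - r j) := by
    intro i
    have hfe : ((Finset.univ.erase i).filter (fun j => r i - r j < 0))
        = Finset.univ.filter (fun j : Fin d => (i:ℕ)+1 ≤ (j:ℕ)) := by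
      ext j
      simp only [Finset.mem_filter, Finset.mem_erase, Finset.mem_univ, true_and, and_true]
      constructor
      · rintro ⟨hji, hlt⟩
        have : i < j := hr.lt_iff_lt.1 (by linarith)
        rw [Fin.lt_def] at this
        omega
      · intro hle
        have hij : i < j := by rw [Fin.lt_def]; omega
        refine ⟨fun hh => absurd (hh ▸ hij) (lt_irrefl j), by have := hr hij; linarith⟩
    have hcard : ((Finset.univ.erase i).filter (fun j => r i - r j < 0)).card
        = d - 1 - (i:ℕ) := by
      rw [hfe, card_filter_le']
      omega
    have := sign_prod (Finset.univ.erase i) (fun j => r i - r j) (fun j hj => by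
      refine sub_ne_zero.2 (fun hh => ?_)
      exact (Finset.mem_erase.1 hj).1 (hr.injective hh).symm)
    rw [hcard] at this
    exact this
  have hprod_s : ∀ i : Fin d, 0 < (-1:ℝ)^(d - 1 - (i:ℕ)) * ∏ j, (r i - s j) := by
    intro i
    have hfe : (Finset.univ.filter (fun j : Fin e => r i - s j < 0))
        = Finset.univ.filter (fun j : Fin e => r i < s j) := by
      ext j
      simp [sub_neg]
    have hcard : (Finset.univ.filter (fun j : Fin e => r i - s j < 0)).card
        = d - 1 - (i:ℕ) := by rw [hfe, hcount i]
    have := sign_prod Finset.univ (fun j => r i - s j) (fun j _ => by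
      refine sub_ne_zero.2 (fun hh => hdist i j hh.symm))
    rw [hcard] at this
    exact this
  have key : ∀ i : Fin d,
      0 < (-1:ℝ)^(d - 1 - (i:ℕ)) * (2 * (derivative f).eval (r i) + c * g.eval (r i)) := by
    intro i
    rw [hderiv i, hgeval]
    calc (0:ℝ) < 2*a*((-1:ℝ)^(d - 1 - (i:ℕ)) * ∏ j ∈ Finset.univ.erase i, (r i - r j))
          + c*b*((-1:ℝ)^(d - 1 - (i:ℕ)) * ∏ j, (r i - s j)) :=
        add_pos (mul_pos (by linarith) (hprod_r i)) (mul_pos (mul_pos hc hb) (hprod_s i))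
      _ = (-1:ℝ)^(d - 1 - (i:ℕ)) * (2 * (a * ∏ j ∈ Finset.univ.erase i, (r i - r j))
          + c * (b * ∏ j, (r i - s j))) := by ring
  have hheval : ∀ x, h.eval x = f.eval x + 2*x*(derivative f).eval x + c*x*g.eval x := by
    intro x; rw [hrec]; simp
  have hsign_r : ∀ i : Fin d, 0 < (-1:ℝ)^(d - (i:ℕ)) * h.eval (r i) := by
    intro i
    have hfr : f.eval (r i) = 0 := by
      rw [hfeval, Finset.prod_eq_zero (Finset.mem_univ i) (sub_self (r i)), mul_zero]
    have hdd : d - (i:ℕ) = (d - 1 - (i:ℕ)) + 1 := by have := i.isLt; omega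
    rw [hheval, hfr, hdd, pow_succ]
    calc (0:ℝ) < (- r i) * ((-1:ℝ)^(d - 1 - (i:ℕ))
          * (2 * (derivative f).eval (r i) + c * g.eval (r i))) :=
        mul_pos (by linarith [hrneg i]) (key i)
      _ = (-1:ℝ)^(d - 1 - (i:ℕ)) * (-1) * (0 + 2*(r i)*(derivative f).eval (r i)
          + c*(r i)*(g.eval (r i))) := by ring
  have hh0 : 0 < h.eval 0 := by
    rw [hheval]
    simp only [mul_zero, zero_mul, add_zero, mul_comm]
    rw [hfeval]
    have : (0:ℝ) < a * ∏ i, (0 - r i) :=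
      mul_pos ha (Finset.prod_pos (fun i _ => by have := hrneg i; linarith))
    linarith
  rcases hde with hca | hca
  · -- case e = e : degree goes up, need point far left
    subst hca
    have hfz : f.coeff (e+1) = 0 := coeff_eq_zero_of_natDegree_lt (by omega)
    have hcoefftop : h.coeff (e+1) = c*b := by
      rw [hrec, coeff_add, coeff_add, mul_assoc, coeff_ofNat_mul, coeff_X_mul, coeff_derivative,
        mul_assoc, coeff_C_mul, coeff_X_mul, hglead, hfz]
      ring
    have htoppos : (0:ℝ) < c*b := mul_pos hc hb
    have hhle : h.natDegree ≤ e+1 := by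
      rw [hrec]
      refine (natDegree_add_le _ _).trans (max_le ((natDegree_add_le _ _).trans (max_le ?_ ?_)) ?_)
      · omega
      · refine natDegree_mul_le.trans ?_
        have h1 : ((2:ℝ[X]) * X).natDegree ≤ 1 := natDegree_mul_le.trans (by simp)
        have h2 : (derivative f).natDegree ≤ e - 1 := (natDegree_derivative_le f).trans (by omega)
        omega
      · refine natDegree_mul_le.trans ?_
        have h1 : ((C c) * X).natDegree ≤ 1 := natDegree_mul_le.trans (by simp)
        omega
    have hhdeg : h.natDegree = e+1 :=
      le_antisymm hhle (le_natDegree_of_ne_zero (by rw [hcoefftop]; exact htoppos.ne'))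
    have hlead : h.leadingCoeff = c*b := by rw [leadingCoeff, hhdeg, hcoefftop]
    obtain ⟨x₀, hx₀r, hx₀0, hx₀sign⟩ : ∃ x₀, (∀ i : Fin e, x₀ < r i) ∧ x₀ < 0 ∧
        0 < (-1:ℝ)^(e+1) * h.eval x₀ := by
      set q := C ((-1:ℝ)^(e+1)) * h.comp (-X) with hq
      have hpow : ((-1:ℝ)^(e+1)) ≠ 0 := pow_ne_zero _ (by norm_num)
      have hXdeg : ((-X : ℝ[X])).natDegree = 1 := by simp
      have hcompdeg : (h.comp (-X)).natDegree = e+1 := by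
        rw [natDegree_comp, hhdeg, hXdeg, mul_one]
      have hqdeg : q.natDegree = e+1 := by rw [hq, natDegree_C_mul hpow, hcompdeg]
      have hcomplead : (h.comp (-X)).leadingCoeff = h.leadingCoeff * (-1:ℝ)^(e+1) := by
        rw [leadingCoeff_comp (by rw [hXdeg]; omega), hhdeg]
        congr 1
        simp
      have hqlead : q.leadingCoeff = h.leadingCoeff := by
        rw [hq, leadingCoeff_mul, leadingCoeff_C, hcomplead]
        have hone : ((-1:ℝ)^(e+1)) * ((-1:ℝ)^(e+1)) = 1 := by
          rw [← pow_add]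
          exact Even.neg_one_pow ⟨e+1, by ring⟩
        calc ((-1:ℝ)^(e+1)) * (h.leadingCoeff * (-1:ℝ)^(e+1))
            = h.leadingCoeff * (((-1:ℝ)^(e+1)) * ((-1:ℝ)^(e+1))) := by ring
          _ = h.leadingCoeff := by rw [hone, mul_one]
      have hq0 : 0 < q.degree := natDegree_pos_iff_degree_pos.1 (by rw [hqdeg]; omega)
      have htend := tendsto_atTop_of_leadingCoeff_nonneg q hq0
        (by rw [hqlead, hlead]; exact htoppos.le)
      have hev1 := htend.eventually_ge_atTop 1
      have hev2 : ∀ᶠ x : ℝ in Filter.atTop, ∀ i : Fin e, -(r i) < x :=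
        Filter.eventually_all.2 (fun i => Filter.eventually_gt_atTop _)
      have hev3 := Filter.eventually_gt_atTop (0:ℝ)
      obtain ⟨x, hx⟩ := (hev1.and (hev2.and hev3)).exists
      have hqev : q.eval x = (-1:ℝ)^(e+1) * h.eval (-x) := by
        rw [hq]
        simp [eval_comp]
      refine ⟨-x, fun i => by have := hx.2.1 i; linarith,
        by have := hx.2.2; linarith, ?_⟩
      have := hx.1
      rw [hqev] at this
      linarith
    set p : Fin (e+2) → ℝ := fun k =>
      if hk0 : (k:ℕ) = 0 then x₀ else if hk : (k:ℕ) < e+1 then r ⟨(k:ℕ)-1, by omega⟩ else 0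
      with hpdef
    have hple : ∀ k, p k ≤ 0 := by
      intro k
      simp only [hpdef]
      split_ifs
      · exact hx₀0.le
      · exact (hrneg _).le
      · exact le_rfl
    have hpcast : ∀ i : Fin (e+1), (hi : (i:ℕ) ≠ 0) → p i.castSucc = r ⟨(i:ℕ)-1, by omega⟩ := by
      intro i hi
      simp only [hpdef]
      rw [dif_neg (by simpa using hi), dif_pos (by have := i.isLt; simp; omega)]
      exact congrArg r (Fin.ext (by simp))
    have hpcast0 : p (Fin.castSucc 0) = x₀ := by
      simp only [hpdef]
      rw [dif_pos (by simp)]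
    have hpsucc : ∀ i : Fin (e+1), (hi : (i:ℕ) < e) → p i.succ = r ⟨(i:ℕ), hi⟩ := by
      intro i hi
      simp only [hpdef]
      rw [dif_neg (by simp), dif_pos (by simp; omega)]
      exact congrArg r (Fin.ext (by simp))
    have hpsucclast : ∀ i : Fin (e+1), (hi : (i:ℕ) = e) → p i.succ = 0 := by
      intro i hi
      simp only [hpdef]
      rw [dif_neg (by simp), dif_neg (by simp; omega)]
    have hpmono : StrictMono p := by
      rw [Fin.strictMono_iff_lt_succ]
      intro i
      by_cases hi0 : (i:ℕ) = 0
      · by_cases hid : (i:ℕ) < e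
        · rw [show i.castSucc = Fin.castSucc 0 from by ext; simp [hi0], hpcast0, hpsucc i hid]
          exact hx₀r _
        · rw [show i.castSucc = Fin.castSucc 0 from by ext; simp [hi0], hpcast0,
            hpsucclast i (by omega)]
          exact hx₀0
      · by_cases hid : (i:ℕ) < e
        · rw [hpcast i hi0, hpsucc i hid]
          exact hr (by rw [Fin.lt_def]; show (i:ℕ)-1 < (i:ℕ); omega)
        · rw [hpcast i hi0, hpsucclast i (by omega)]
          exact hrneg _
    have hsigns : ∀ k : Fin (e+2), 0 < (-1:ℝ)^(e+1 - (k:ℕ)) * h.eval (p k) := by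
      intro k
      by_cases hk0 : (k:ℕ) = 0
      · rw [show p k = x₀ from by simp only [hpdef]; rw [dif_pos hk0], hk0, Nat.sub_zero]
        exact hx₀sign
      · by_cases hk : (k:ℕ) < e+1
        · rw [show p k = r ⟨(k:ℕ)-1, by omega⟩ from by
            simp only [hpdef]; rw [dif_neg hk0, dif_pos hk]]
          have hexp : e+1 - (k:ℕ) = e - ((k:ℕ)-1) := by omega
          rw [hexp]
          exact hsign_r ⟨(k:ℕ)-1, by omega⟩
        · rw [show p k = 0 from by simp only [hpdef]; rw [dif_neg hk0, dif_neg hk],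
            show e+1 - (k:ℕ) = 0 from by have := k.isLt; omega, pow_zero, one_mul]
          exact hh0
    obtain ⟨ρ, hρmono, hρmem, hρfact⟩ := exists_roots_of_alternating h (e+1) hhdeg p hpmono hsigns
    have hρneg : ∀ i, ρ i < 0 := by
      intro i
      have h1 := (hρmem i).2
      have h2 := hple i.succ
      linarith
    have hjlt : ∀ (i : Fin (e+1)) (j : Fin e), (j:ℕ)+1 ≤ (i:ℕ) → r j < ρ i := by
      intro i j hji
      have h1 : r j ≤ r ⟨(i:ℕ)-1, by omega⟩ := hr.monotone (by rw [Fin.le_def]; simp; omega)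
      have h2 := (hρmem i).1
      rw [hpcast i (by omega)] at h2
      linarith
    have hjgt : ∀ (i : Fin (e+1)) (j : Fin e), (i:ℕ) ≤ (j:ℕ) → ρ i < r j := by
      intro i j hij
      have hid : (i:ℕ) < e := by have := j.isLt; omega
      have h1 : r ⟨(i:ℕ), hid⟩ ≤ r j := hr.monotone (by rw [Fin.le_def]; simp; omega)
      have h2 := (hρmem i).2
      rw [hpsucc i hid] at h2
      linarith
    refine ⟨e+1, e, h.leadingCoeff, a, ρ, r, by rw [hlead]; exact htoppos, ha, hρmono,
      hρfact, hf, hρneg, hrneg, Or.inr rfl, ?_, ?_⟩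
    · intro i
      have hfe : Finset.univ.filter (fun j : Fin e => ρ i < r j)
          = Finset.univ.filter (fun j : Fin e => (i:ℕ) ≤ (j:ℕ)) := by
        ext j
        simp only [Finset.mem_filter, Finset.mem_univ, true_and]
        constructor
        · intro hlt
          by_contra hc2
          push_neg at hc2
          have := hjlt i j (by omega)
          linarith
        · exact hjgt i j
      rw [hfe, card_filter_le']
      omega
    · intro i j
      rcases le_or_gt (i:ℕ) (j:ℕ) with hij | hij
      · exact (hjgt i j hij).ne'
      · exact (hjlt i j (by omega)).ne
  · -- case e + 1 = d : same degree
    subst hca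
    have hcoefftop : h.coeff (e+1) = a + 2*(a*((e:ℝ)+1)) + c*b := by
      rw [hrec, coeff_add, coeff_add, mul_assoc, coeff_ofNat_mul, coeff_X_mul, coeff_derivative,
        mul_assoc, coeff_C_mul, coeff_X_mul, hflead, hglead]
    have htoppos : (0:ℝ) < a + 2*(a*((e:ℝ)+1)) + c*b := by
      have h1 : (0:ℝ) ≤ (e:ℝ) := Nat.cast_nonneg e
      have h2 := mul_pos hc hb
      nlinarith
    have hhle : h.natDegree ≤ e+1 := by
      rw [hrec]
      refine (natDegree_add_le _ _).trans (max_le ((natDegree_add_le _ _).trans (max_le ?_ ?_)) ?_)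
      · omega
      · refine natDegree_mul_le.trans ?_
        have h1 : ((2:ℝ[X]) * X).natDegree ≤ 1 := natDegree_mul_le.trans (by simp)
        have h2 : (derivative f).natDegree ≤ e := (natDegree_derivative_le f).trans (by omega)
        omega
      · refine natDegree_mul_le.trans ?_
        have h1 : ((C c) * X).natDegree ≤ 1 := natDegree_mul_le.trans (by simp)
        omega
    have hhdeg : h.natDegree = e+1 :=
      le_antisymm hhle (le_natDegree_of_ne_zero (by rw [hcoefftop]; exact htoppos.ne'))
    have hlead : h.leadingCoeff = a + 2*(a*((e:ℝ)+1)) + c*b := by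
      rw [leadingCoeff, hhdeg, hcoefftop]
    set p : Fin (e+2) → ℝ := fun k => if hk : (k:ℕ) < e+1 then r ⟨(k:ℕ), hk⟩ else 0 with hpdef
    have hple : ∀ k, p k ≤ 0 := by
      intro k
      simp only [hpdef]
      split_ifs
      · exact (hrneg _).le
      · exact le_rfl
    have hpcast : ∀ i : Fin (e+1), p i.castSucc = r i := by
      intro i
      simp only [hpdef]
      rw [dif_pos (by simpa using i.isLt)]
      exact congrArg r (Fin.ext (by simp))
    have hpsucc : ∀ i : Fin (e+1), (hi : (i:ℕ)+1 < e+1) → p i.succ = r ⟨(i:ℕ)+1, hi⟩ := by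
      intro i hi
      simp only [hpdef]
      rw [dif_pos (by simp; omega)]
      exact congrArg r (Fin.ext (by simp))
    have hpsucclast : ∀ i : Fin (e+1), (hi : (i:ℕ) = e) → p i.succ = 0 := by
      intro i hi
      simp only [hpdef]
      rw [dif_neg (by simp; omega)]
    have hpmono : StrictMono p := by
      rw [Fin.strictMono_iff_lt_succ]
      intro i
      by_cases hi : (i:ℕ)+1 < e+1
      · rw [hpcast i, hpsucc i hi]
        exact hr (by rw [Fin.lt_def]; simp)
      · rw [hpcast i, hpsucclast i (by have := i.isLt; omega)]
        exact hrneg i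
    have hsigns : ∀ k : Fin (e+2), 0 < (-1:ℝ)^(e+1 - (k:ℕ)) * h.eval (p k) := by
      intro k
      by_cases hk : (k:ℕ) < e+1
      · rw [show p k = r ⟨(k:ℕ), hk⟩ from by simp only [hpdef]; rw [dif_pos hk]]
        exact hsign_r ⟨(k:ℕ), hk⟩
      · rw [show p k = 0 from by simp only [hpdef]; rw [dif_neg hk],
          show e+1 - (k:ℕ) = 0 from by have := k.isLt; omega, pow_zero, one_mul]
        exact hh0
    obtain ⟨ρ, hρmono, hρmem, hρfact⟩ :=
      exists_roots_of_alternating h (e+1) hhdeg p hpmono hsigns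
    have hρneg : ∀ i, ρ i < 0 := fun i => lt_of_lt_of_le (hρmem i).2 (hple i.succ)
    have hjlt : ∀ (i j : Fin (e+1)), (j:ℕ) ≤ (i:ℕ) → r j < ρ i := by
      intro i j hji
      have h1 : r j ≤ r i := hr.monotone (by rw [Fin.le_def]; omega)
      have h2 := (hρmem i).1
      rw [hpcast i] at h2
      linarith
    have hjgt : ∀ (i j : Fin (e+1)), (i:ℕ) < (j:ℕ) → ρ i < r j := by
      intro i j hij
      have hi1 : (i:ℕ)+1 < e+1 := by have := j.isLt; omega
      have h1 : r ⟨(i:ℕ)+1, hi1⟩ ≤ r j := hr.monotone (by rw [Fin.le_def]; simp; omega)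
      have h2 := (hρmem i).2
      rw [hpsucc i hi1] at h2
      linarith
    refine ⟨e+1, e+1, h.leadingCoeff, a, ρ, r, by rw [hlead]; exact htoppos, ha, hρmono,
      hρfact, hf, hρneg, hrneg, Or.inl rfl, ?_, ?_⟩
    · intro i
      have hfe : Finset.univ.filter (fun j : Fin (e+1) => ρ i < r j)
          = Finset.univ.filter (fun j : Fin (e+1) => (i:ℕ)+1 ≤ (j:ℕ)) := by
        ext j
        simp only [Finset.mem_filter, Finset.mem_univ, true_and]
        constructor
        · intro hlt
          by_contra hc2
          push_neg at hc2
          have := hjlt i j (by omega)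
          linarith
        · intro hh2
          exact hjgt i j (by omega)
      rw [hfe, card_filter_le']
      omega
    · intro i j
      rcases le_or_gt (j:ℕ) (i:ℕ) with hij | hij
      · exact (hjlt i j hij).ne
      · exact (hjgt i j hij).ne'


lemma RR_main : ∀ n : ℕ, RR (Qu (n+1)) (Qu (n+2)) := by
  intro n
  induction n with
  | zero =>
    have hQ1 : Qu 1 = 1 := by
      rw [Qu, Finset.sum_range_one]
      norm_num [show u 1 1 = 1 from rfl]
    have hQ2 : Qu 2 = 1 := by
      rw [Qu, Finset.sum_range_succ, Finset.sum_range_one]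
      norm_num [show u 2 1 = 1 from rfl, show u 2 2 = 0 from rfl]
    refine ⟨0, 0, 1, 1, Fin.elim0, Fin.elim0, one_pos, one_pos, fun a => a.elim0, ?_, ?_,
      fun i => i.elim0, fun j => j.elim0, Or.inl rfl, fun i => i.elim0, fun i => i.elim0⟩
    · rw [hQ2]; simp
    · rw [hQ1]; simp
  | succ n ih =>
    exact step (c := 2*((n+1:ℕ):ℝ)) (by positivity) (Qu_rec (n+1) (by omega)) ih

lemma Qu_factor : ∀ n : ℕ, 1 ≤ n → ∃ (e : ℕ) (b : ℝ) (s : Fin e → ℝ),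
    0 < b ∧ Qu n = C b * ∏ j, (X - C (s j)) := by
  intro n hn
  obtain ⟨m, rfl⟩ : ∃ m, n = m+1 := ⟨n-1, by omega⟩
  obtain ⟨d, e, a, b, r, s, ha, hb, hr, hfacf, hfacg, _⟩ := RR_main m
  exact ⟨e, b, s, hb, hfacg⟩

/-- The polynomials `P_n` satisfy
`P_n(t) = 2t P'_{n-1}(t) − P_{n-1}(t) + 2t(n-2) P_{n-2}(t)` for n ≥ 2,
and every `P_n` is real-rooted (all complex roots are real). -/
theorem Pu_recurrence_and_real_rooted :
    (∀ n, 2 ≤ n →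
      Pu n = 2 * X * derivative (Pu (n - 1)) - Pu (n - 1)
        + C (2 * ((n : ℝ) - 2)) * X * Pu (n - 2)) ∧
    (∀ n, ∀ z ∈ ((Pu n).map (algebraMap ℝ ℂ)).roots, z.im = 0) := by
  constructor
  · intro n hn
    obtain ⟨m, rfl⟩ : ∃ m, n = m+2 := ⟨n-2, by omega⟩
    rw [show m+2-1 = m+1 from rfl, show m+2-2 = m from rfl,
      show ((m+2 : ℕ) : ℝ) - 2 = (m:ℝ) from by push_cast; ring]
    exact Pu_rec m
  · intro n z hz
    match n with
    | 0 =>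
      have hP0 : Pu 0 = 1 := by
        rw [Pu, Finset.sum_range_one]
        norm_num [show u 0 0 = 1 from rfl]
      rw [hP0] at hz
      simp at hz
    | (m+1) =>
      have h1 : 1 ≤ m+1 := by omega
      obtain ⟨e, b, s, hb, hfac⟩ := Qu_factor (m+1) h1
      rw [Pu_eq (m+1) h1, hfac] at hz
      have hmap : ((X : ℝ[X]) * (C b * ∏ j, (X - C (s j)))).map (algebraMap ℝ ℂ)
          = (X : ℂ[X]) * (C ((b:ℝ):ℂ) * ∏ j, (X - C ((s j : ℝ) : ℂ))) := by
        simp [Polynomial.map_mul, Polynomial.map_prod, Polynomial.map_sub]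
      rw [hmap] at hz
      have hz' := (mem_roots'.1 hz).2
      simp only [IsRoot, eval_mul, eval_X, eval_C, eval_prod, eval_sub] at hz'
      rcases mul_eq_zero.1 hz' with h0 | h0
      · rw [h0]
        rfl
      rcases mul_eq_zero.1 h0 with h0' | h0'
      · exact absurd h0' (by exact_mod_cast hb.ne')
      · obtain ⟨j, _, hj⟩ := Finset.prod_eq_zero_iff.1 h0'
        rw [sub_eq_zero.1 hj]
        exact Complex.ofReal_im _
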